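/- Let S be a nonabelian simple subnormal subgroup of a finite group G and suppose a subgroup U of S satisfies: for every automorphism φ of S induced by conjugation by an element of N_G(S), the image φ(U) is S-conjugate to U. Let g₁,…,gₙ be a right transversal of N_G(S) in G, A = ⟨S^G⟩, and V = ⟨U^{g₁},…,U^{gₙ}⟩. Then V^G = V^A, i.e., the G-conjugacy class of V equals its A-conjugacy class. -/

import Mathlib

def conjSub {G : Type*} [Group G] (g : G) (H : Subgroup G) : Subgroup G :=
  H.map (MulAut.conj g).toMonoidHom

def IsSubnormalIn {G : Type*} [Group G] (H : Subgroup G) : Prop :=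
  ∃ n : ℕ, ∃ c : Fin (n + 1) → Subgroup G, c 0 = H ∧ c (Fin.last n) = ⊤ ∧
    ∀ i : Fin n, c i.castSucc ≤ c i.succ ∧ ((c i.castSucc).subgroupOf (c i.succ)).Normal

namespace ClassInvAux

variable {G : Type*} [Group G]

open scoped commutatorElement

theorem mem_conjSub {g x : G} {H : Subgroup G} : x ∈ conjSub g H ↔ g⁻¹ * x * g ∈ H := by
  constructor
  · rintro ⟨h, hh, rfl⟩
    simpa [MulAut.conj, mul_assoc] using hh
  · intro h
    exact ⟨g⁻¹ * x * g, h, by simp [MulAut.conj]; group⟩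

theorem conjSub_conjSub (a b : G) (H : Subgroup G) :
    conjSub a (conjSub b H) = conjSub (a * b) H := by
  ext x
  rw [mem_conjSub, mem_conjSub, mem_conjSub]
  have e : (a * b)⁻¹ * x * (a * b) = b⁻¹ * (a⁻¹ * x * a) * b := by group
  rw [e]

theorem conjSub_mono {a : G} {H K : Subgroup G} (h : H ≤ K) : conjSub a H ≤ conjSub a K := by
  intro x hx; rw [mem_conjSub] at *; exact h hx

theorem conjSub_iSup {ι : Sort*} (a : G) (f : ι → Subgroup G) :
    conjSub a (⨆ i, f i) = ⨆ i, conjSub a (f i) :=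
  Subgroup.map_iSup _ f

theorem conjSub_top (a : G) : conjSub a (⊤ : Subgroup G) = ⊤ := by
  ext x; simp [mem_conjSub]

theorem conjSub_self_mem {s : G} {S : Subgroup G} (hs : s ∈ S) : conjSub s S = S := by
  ext x
  rw [mem_conjSub]
  constructor
  · intro h
    have := S.mul_mem (S.mul_mem hs h) (S.inv_mem hs)
    simpa [mul_assoc] using this
  · intro h
    exact S.mul_mem (S.mul_mem (S.inv_mem hs) h) hs

theorem conjSub_eq_self_of_centralizes {c : G} {H : Subgroup G}
    (hc : ∀ h ∈ H, c * h = h * c) : conjSub c H = H := by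
  ext x
  rw [mem_conjSub]
  constructor
  · intro h
    have h2 := hc _ h
    have e : x = c * (c⁻¹ * x * c) * c⁻¹ := by group
    rw [e, h2, mul_assoc, mul_inv_cancel, mul_one]
    exact h
  · intro h
    have h2 := hc _ h
    have e : c⁻¹ * x * c = x := by
      rw [mul_assoc, ← h2, ← mul_assoc, inv_mul_cancel, one_mul]
    rw [e]; exact h

theorem conjSub_commutator (w : G) (H K : Subgroup G) :
    conjSub w ⁅H, K⁆ = ⁅conjSub w H, conjSub w K⁆ :=
  Subgroup.map_commutator H K _


/-- `H` is a subgroup of `K` normalized by all of `K`. -/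
def NormalIn (H K : Subgroup G) : Prop :=
  H ≤ K ∧ ∀ k ∈ K, ∀ h ∈ H, k * h * k⁻¹ ∈ H

/-- `H` is subnormal in `K` with defect at most `d` (chain of length `d`). -/
def Subn : ℕ → Subgroup G → Subgroup G → Prop
  | 0, H, K => H = K
  | (d + 1), H, K => ∃ M : Subgroup G, Subn d H M ∧ NormalIn M K

theorem Subn.le : ∀ {d : ℕ} {H K : Subgroup G}, Subn d H K → H ≤ K
  | 0, _, _, h => le_of_eq h
  | (d + 1), _, _, ⟨_, h1, h2⟩ => (Subn.le h1).trans h2.1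

theorem Subn.restrict : ∀ {d : ℕ} {H K N : Subgroup G},
    Subn d H K → NormalIn N K → H ≤ N → Subn d H N
  | 0, H, K, N, h, hN, hHN => by
    have h' : H = K := h
    have hNK : N = K := le_antisymm hN.1 (h' ▸ hHN)
    show H = N
    exact h'.trans hNK.symm
  | (d + 1), H, K, N, ⟨M, hM, hMK⟩, hN, hHN => by
    refine ⟨M ⊓ N, Subn.restrict hM ⟨inf_le_left, ?_⟩ (le_inf hM.le hHN), ?_⟩
    · rintro m hm x ⟨hx1, hx2⟩
      exact ⟨M.mul_mem (M.mul_mem hm hx1) (M.inv_mem hm), hN.2 m (hMK.1 hm) x hx2⟩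
    · refine ⟨inf_le_right, ?_⟩
      rintro k hk x ⟨hx1, hx2⟩
      exact ⟨hMK.2 k (hN.1 hk) x hx1, N.mul_mem (N.mul_mem hk hx2) (N.inv_mem hk)⟩

theorem Subn.conj : ∀ {d : ℕ} {H K : Subgroup G} (w : G),
    Subn d H K → Subn d (conjSub w H) (conjSub w K)
  | 0, H, K, w, h => by rw [Subn]; rw [Subn] at h; rw [h]
  | (d + 1), H, K, w, ⟨M, hM, hMK⟩ => by
    refine ⟨conjSub w M, Subn.conj w hM, conjSub_mono hMK.1, ?_⟩
    intro k hk h hh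
    rw [mem_conjSub] at hk hh ⊢
    have e : w⁻¹ * (k * h * k⁻¹) * w
        = (w⁻¹ * k * w) * (w⁻¹ * h * w) * (w⁻¹ * k * w)⁻¹ := by group
    rw [e]
    exact hMK.2 _ hk _ hh


theorem dichotomy {S : Subgroup G} (hS : IsSimpleGroup S) {K : Subgroup G}
    (hKS : K ≤ S) (hconj : ∀ s ∈ S, ∀ k ∈ K, s * k * s⁻¹ ∈ K) : K = ⊥ ∨ K = S := by
  have hN : (K.subgroupOf S).Normal := by
    constructor
    intro n hn g
    rw [Subgroup.mem_subgroupOf] at hn ⊢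
    exact hconj g g.2 n hn
  rcases IsSimpleGroup.eq_bot_or_eq_top_of_normal (K.subgroupOf S) hN with h | h
  · left
    rw [Subgroup.subgroupOf_eq_bot] at h
    exact le_bot_iff.mp (h le_rfl hKS)
  · right
    rw [Subgroup.subgroupOf_eq_top] at h
    exact le_antisymm hKS h

theorem perfect_of_simple_nonabelian {S : Subgroup G} (hS : IsSimpleGroup S)
    (hnonab : ¬ ∀ a b : S, a * b = b * a) : ⁅S, S⁆ = S := by
  have hle : ⁅S, S⁆ ≤ S := by
    rw [Subgroup.commutator_le]
    intro a ha b hb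
    exact S.mul_mem (S.mul_mem (S.mul_mem ha hb) (S.inv_mem ha)) (S.inv_mem hb)
  have hconj : ∀ s ∈ S, ∀ k ∈ ⁅S, S⁆, s * k * s⁻¹ ∈ ⁅S, S⁆ := by
    intro s hs k hk
    have hc : conjSub s ⁅S, S⁆ = ⁅S, S⁆ := by
      rw [conjSub_commutator, conjSub_self_mem hs]
    rw [← hc, mem_conjSub]
    have e : s⁻¹ * (s * k * s⁻¹) * s = k := by group
    rw [e]; exact hk
  rcases dichotomy hS hle hconj with h | h
  · exfalso
    apply hnonab
    intro a b
    have hm : ⁅(a : G), (b : G)⁆ ∈ ⁅S, S⁆ :=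
      Subgroup.commutator_mem_commutator a.2 b.2
    rw [h, Subgroup.mem_bot, commutatorElement_eq_one_iff_mul_comm] at hm
    exact Subtype.ext (by push_cast; exact hm)
  · exact h

theorem eq_of_subn_simple : ∀ {d : ℕ} {S' S : Subgroup G}, Subn d S' S → IsSimpleGroup S →
    S' ≠ ⊥ → S' = S
  | 0, _, _, h, _, _ => h
  | (d + 1), S', S, ⟨M, hM, hMS⟩, hS, hne => by
    rcases dichotomy hS hMS.1 hMS.2 with h | h
    · exact absurd (le_bot_iff.mp (h ▸ hM.le)) hne
    · exact eq_of_subn_simple (h ▸ hM) hS hne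

theorem lemmaB : ∀ {d : ℕ} {S K N : Subgroup G}, Subn d S K → NormalIn N K →
    S ⊓ N = ⊥ → ⁅S, S⁆ = S → ⁅S, N⁆ = ⊥
  | 0, S, K, N, h, hN, hdisj, _ => by
    have h' : S = K := h
    have hNS : N ≤ S := h' ▸ hN.1
    have hNbot : N = ⊥ := le_bot_iff.mp (hdisj ▸ le_inf hNS le_rfl)
    rw [hNbot]
    exact Subgroup.commutator_bot_right S
  | (d + 1), S, K, N, ⟨H, hH, hHK⟩, hN, hdisj, hperf => by
    have hSH : S ≤ H := hH.le
    have hSK : S ≤ K := hSH.trans hHK.1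
    have hN' : NormalIn (H ⊓ N) H := by
      refine ⟨inf_le_left, ?_⟩
      rintro h hh x ⟨hx1, hx2⟩
      exact ⟨H.mul_mem (H.mul_mem hh hx1) (H.inv_mem hh), hN.2 h (hHK.1 hh) x hx2⟩
    have hdisj' : S ⊓ (H ⊓ N) = ⊥ :=
      le_bot_iff.mp (hdisj ▸ inf_le_inf_left S inf_le_right)
    have IH : ⁅S, H ⊓ N⁆ = ⊥ := lemmaB hH hN' hdisj' hperf
    have hle : ⁅S, N⁆ ≤ H ⊓ N := by
      rw [Subgroup.commutator_le]
      intro s hs m hm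
      constructor
      · have h1 : m * s⁻¹ * m⁻¹ ∈ H := hHK.2 m (hN.1 hm) s⁻¹ (H.inv_mem (hSH hs))
        have e : ⁅s, m⁆ = s * (m * s⁻¹ * m⁻¹) := by group
        rw [e]; exact H.mul_mem (hSH hs) h1
      · have h1 : s * m * s⁻¹ ∈ N := hN.2 s (hSK hs) m hm
        have e : ⁅s, m⁆ = s * m * s⁻¹ * m⁻¹ := by group
        rw [e]; exact N.mul_mem h1 (N.inv_mem hm)
    have h3 : ⁅⁅S, N⁆, S⁆ = ⊥ := by
      refine le_bot_iff.mp ?_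
      calc ⁅⁅S, N⁆, S⁆ ≤ ⁅H ⊓ N, S⁆ := Subgroup.commutator_mono hle le_rfl
        _ = ⁅S, H ⊓ N⁆ := Subgroup.commutator_comm _ _
        _ = ⊥ := IH
    have h4 : ⁅⁅N, S⁆, S⁆ = ⊥ := by
      rw [Subgroup.commutator_comm N S]; exact h3
    have h5 := Subgroup.commutator_commutator_eq_bot_of_rotate h3 h4
    rwa [hperf] at h5


theorem key : ∀ (e : ℕ) {K S T : Subgroup G}, (∃ d, Subn d S K) → Subn e T K →
    IsSimpleGroup S → IsSimpleGroup T → ⁅S, S⁆ = S → ⁅T, T⁆ = T → S ≠ T → ⁅S, T⁆ = ⊥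
  | 0, K, S, T, ⟨d, hS⟩, hT, hSsimp, hTsimp, _, _, hne => by
    have h' : T = K := hT
    have hSne : S ≠ ⊥ := by
      have : Nontrivial S := hSsimp.toNontrivial
      exact (Subgroup.nontrivial_iff_ne_bot S).mp this
    exact absurd (eq_of_subn_simple (h' ▸ hS) hTsimp hSne) hne
  | (e + 1), K, S, T, ⟨d, hS⟩, ⟨N, hTN, hNK⟩, hSsimp, hTsimp, hSperf, hTperf, hne => by
    by_cases hSN : S ≤ N
    · exact key e ⟨d, hS.restrict hNK hSN⟩ hTN hSsimp hTsimp hSperf hTperf hne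
    · have hSK : S ≤ K := hS.le
      have hconj : ∀ s ∈ S, ∀ x ∈ S ⊓ N, s * x * s⁻¹ ∈ S ⊓ N := by
        rintro s hs x ⟨hx1, hx2⟩
        exact ⟨S.mul_mem (S.mul_mem hs hx1) (S.inv_mem hs), hNK.2 s (hSK hs) x hx2⟩
      rcases dichotomy hSsimp inf_le_left hconj with h | h
      · have hSNbot : ⁅S, N⁆ = ⊥ := lemmaB hS hNK h hSperf
        refine le_bot_iff.mp ?_
        calc ⁅S, T⁆ ≤ ⁅S, N⁆ := Subgroup.commutator_mono le_rfl hTN.le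
          _ = ⊥ := hSNbot
      · exact absurd (inf_eq_left.mp h) hSN


theorem isSimpleGroup_conjSub {S : Subgroup G} (hS : IsSimpleGroup S) (w : G) :
    IsSimpleGroup (conjSub w S) := by
  haveI := hS
  have e : S ≃* conjSub w S := (MulAut.conj w).subgroupMap S
  haveI : Nontrivial (conjSub w S) := e.symm.toEquiv.nontrivial
  exact IsSimpleGroup.isSimpleGroup_of_surjective e.toMonoidHom e.surjective

theorem subn_of_isSubnormalIn {S : Subgroup G} (h : IsSubnormalIn S) : ∃ d, Subn d S ⊤ := by
  obtain ⟨n, c, hc0, hctop, hstep⟩ := h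
  have main : ∀ m : ℕ, ∀ hm : m < n + 1, Subn m (c 0) (c ⟨m, hm⟩) := by
    intro m
    induction m with
    | zero =>
      intro hm
      have h0 : (⟨0, hm⟩ : Fin (n + 1)) = 0 := by ext; simp
      rw [h0]
      show c 0 = c 0
      rfl
    | succ k ih =>
      intro hm
      have hkn : k < n := Nat.lt_of_succ_lt_succ hm
      have hk : k < n + 1 := Nat.lt_of_succ_lt hm
      have hcast : (Fin.castSucc ⟨k, hkn⟩ : Fin (n + 1)) = ⟨k, hk⟩ := rfl
      have hsucc : (Fin.succ ⟨k, hkn⟩ : Fin (n + 1)) = ⟨k + 1, hm⟩ := rfl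
      obtain ⟨hle, hnorm⟩ := hstep ⟨k, hkn⟩
      rw [hcast, hsucc] at hle hnorm
      refine ⟨c ⟨k, hk⟩, ih hk, hle, ?_⟩
      intro x hx y hy
      have hyx : (⟨y, hle hy⟩ : c ⟨k + 1, hm⟩) ∈ (c ⟨k, hk⟩).subgroupOf (c ⟨k + 1, hm⟩) := by
        rw [Subgroup.mem_subgroupOf]; exact hy
      have := hnorm.conj_mem _ hyx ⟨x, hx⟩
      rw [Subgroup.mem_subgroupOf] at this
      exact this
  have hm := main n (Nat.lt_succ_self n)
  have hlast : (⟨n, Nat.lt_succ_self n⟩ : Fin (n + 1)) = Fin.last n := rfl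
  rw [hc0, hlast, hctop] at hm
  exact ⟨n, hm⟩


theorem conjSub_one (H : Subgroup G) : conjSub (1 : G) H = H := by
  ext x; rw [mem_conjSub]; simp

theorem normalizer_of_conjSub_eq {w : G} {S : Subgroup G} (h : conjSub w S = S) :
    w ∈ (Subgroup.normalizer (S : Set G)) := by
  rw [Subgroup.mem_normalizer_iff]
  intro x
  constructor
  · intro hx
    rw [← h, mem_conjSub]
    have e : w⁻¹ * (w * x * w⁻¹) * w = x := by group
    rw [e]; exact hx
  · intro hx
    rw [← h, mem_conjSub] at hx
    have e : w⁻¹ * (w * x * w⁻¹) * w = x := by group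
    rwa [e] at hx

theorem prod_decomp {C : Subgroup G} : ∀ (m : ℕ) (v : Fin m → G) (j : Fin m),
    (∀ k, k ≠ j → v k ∈ C) → (∀ c ∈ C, v j * c * (v j)⁻¹ ∈ C) →
    ∃ c ∈ C, (List.ofFn v).prod = c * v j
  | 0, _, j, _, _ => j.elim0
  | (m + 1), v, j, hC, hnorm => by
    rw [List.ofFn_succ, List.prod_cons]
    rcases Fin.eq_zero_or_eq_succ j with rfl | ⟨i, rfl⟩
    · have htail : (List.ofFn (fun i : Fin m => v i.succ)).prod ∈ C := by
        apply Subgroup.list_prod_mem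
        intro y hy
        rw [List.mem_ofFn] at hy
        obtain ⟨k, rfl⟩ := hy
        exact hC _ (Fin.succ_ne_zero k)
      refine ⟨v 0 * (List.ofFn (fun i : Fin m => v i.succ)).prod * (v 0)⁻¹, hnorm _ htail, by group⟩
    · have hC' : ∀ k : Fin m, k ≠ i → (fun i : Fin m => v i.succ) k ∈ C := by
        intro k hk
        exact hC _ (by simpa [Fin.succ_inj] using hk)
      obtain ⟨c, hc, hprod⟩ := prod_decomp m (fun i : Fin m => v i.succ) i hC' hnorm
      refine ⟨v 0 * c, C.mul_mem (hC 0 (Fin.succ_ne_zero i).symm) hc, ?_⟩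
      show v 0 * (List.ofFn (fun i : Fin m => v i.succ)).prod = v 0 * c * v i.succ
      rw [hprod]
      group

end ClassInvAux

open ClassInvAux in
/-- If `S` is a nonabelian simple subnormal subgroup of `G`, `U ≤ S` satisfies
`U^{Aut_G(S)} = U^S` (every conjugate of `U` by an element of `N_G(S)` is an
`S`-conjugate of `U`), `g₁, …, gₙ` is a right transversal of `N_G(S)` in `G`,
`A = ⟨S^G⟩` and `V = ⟨U^{g₁}, …, U^{gₙ}⟩`, then `V^G = V^A`. -/
theorem class_invariant_of_aut_invariant {G : Type*} [Group G] [Finite G]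
    (S U : Subgroup G) (hsub : IsSubnormalIn S) (hsimple : IsSimpleGroup S)
    (hnonab : ¬ ∀ a b : S, a * b = b * a) (hUS : U ≤ S)
    (hinv : ∀ x ∈ Subgroup.normalizer (S : Set G), ∃ s ∈ S, conjSub x⁻¹ U = conjSub s⁻¹ U)
    (n : ℕ) (g : Fin n → G)
    (htrans : ∀ x : G, ∃! i : Fin n, x * (g i)⁻¹ ∈ Subgroup.normalizer (S : Set G)) :
    {K : Subgroup G | ∃ x : G, K = conjSub x⁻¹ (⨆ i : Fin n, conjSub (g i)⁻¹ U)} =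
      {K : Subgroup G | ∃ a ∈ Subgroup.normalClosure (S : Set G),
        K = conjSub a⁻¹ (⨆ i : Fin n, conjSub (g i)⁻¹ U)} := by
  classical
  ext K
  simp only [Set.mem_setOf_eq]
  constructor
  case mpr => rintro ⟨a, -, rfl⟩; exact ⟨a, rfl⟩
  rintro ⟨x, rfl⟩
  -- uniqueness of transversal representatives
  have hginj : ∀ i j : Fin n, g i * (g j)⁻¹ ∈ (Subgroup.normalizer (S : Set G)) → i = j := by
    intro i j h
    obtain ⟨k, -, huniq⟩ := htrans (g i)
    have hi : g i * (g i)⁻¹ ∈ (Subgroup.normalizer (S : Set G)) := by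
      rw [mul_inv_cancel]; exact (Subgroup.normalizer (S : Set G)).one_mem
    exact (huniq i hi).trans (huniq j h).symm
  -- the permutation induced by x
  have H : ∀ i : Fin n, ∃ j, (g i * x) * (g j)⁻¹ ∈ (Subgroup.normalizer (S : Set G)) ∧
      ∀ y, (g i * x) * (g y)⁻¹ ∈ (Subgroup.normalizer (S : Set G)) → y = j := fun i => htrans (g i * x)
  choose σ h1 h2 using H
  have hσinj : Function.Injective σ := by
    intro i1 i2 h12
    apply hginj
    have ha := h1 i1
    have hb := h1 i2
    rw [h12] at ha
    have hmem := (Subgroup.normalizer (S : Set G)).mul_mem ha ((Subgroup.normalizer (S : Set G)).inv_mem hb)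
    have e : g i1 * x * (g (σ i2))⁻¹ * (g i2 * x * (g (σ i2))⁻¹)⁻¹ = g i1 * (g i2)⁻¹ := by
      group
    rwa [e] at hmem
  have hσbij : Function.Bijective σ := Finite.injective_iff_bijective.mp hσinj
  let eσ : Fin n ≃ Fin n := Equiv.ofBijective σ hσbij
  have hesymm : ∀ i, eσ.symm (σ i) = i := fun i => eσ.symm_apply_apply i
  have heapp : ∀ j, σ (eσ.symm j) = j := fun j => eσ.apply_symm_apply j
  -- S-conjugating elements
  choose s hsS hsconj using fun i => hinv _ (h1 i)
  -- the conjugators in each conjugate of S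
  set u : Fin n → G := fun j => (g j)⁻¹ * s (eσ.symm j) * g j with hu
  have huj : ∀ j, u j ∈ conjSub (g j)⁻¹ S := by
    intro j
    rw [mem_conjSub]
    have e2 : ((g j)⁻¹)⁻¹ * u j * (g j)⁻¹ = s (eσ.symm j) := by rw [hu]; group
    rw [e2]; exact hsS _
  -- stepwise conjugation identity
  have hstep : ∀ i, conjSub x⁻¹ (conjSub (g i)⁻¹ U)
      = conjSub (u (σ i))⁻¹ (conjSub (g (σ i))⁻¹ U) := by
    intro i
    rw [conjSub_conjSub, conjSub_conjSub]
    have e1 : x⁻¹ * (g i)⁻¹ = (g (σ i))⁻¹ * (g i * x * (g (σ i))⁻¹)⁻¹ := by group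
    rw [e1, ← conjSub_conjSub, hsconj i, conjSub_conjSub]
    congr 1
    show (g (σ i))⁻¹ * (s i)⁻¹
        = ((g (σ i))⁻¹ * s (eσ.symm (σ i)) * g (σ i))⁻¹ * (g (σ i))⁻¹
    rw [hesymm i]
    group
  -- distinct conjugates of S
  have hdist : ∀ j k : Fin n, conjSub (g j)⁻¹ S = conjSub (g k)⁻¹ S → j = k := by
    intro j k hjk
    refine (hginj k j ?_).symm
    apply normalizer_of_conjSub_eq
    have h3 : conjSub (g k) (conjSub (g j)⁻¹ S) = conjSub (g k) (conjSub (g k)⁻¹ S) := by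
      rw [hjk]
    rw [conjSub_conjSub, conjSub_conjSub, mul_inv_cancel, conjSub_one] at h3
    exact h3
  -- properties of the conjugates of S
  obtain ⟨d0, hSd⟩ := ClassInvAux.subn_of_isSubnormalIn hsub
  have hsubj : ∀ w : G, ∃ d, Subn d (conjSub w S) ⊤ := fun w =>
    ⟨d0, by have h := hSd.conj w; rwa [conjSub_top] at h⟩
  have hsimpj : ∀ w : G, IsSimpleGroup (conjSub w S) := fun w =>
    isSimpleGroup_conjSub hsimple w
  have hperfS : ⁅S, S⁆ = S := perfect_of_simple_nonabelian hsimple hnonab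
  have hperfj : ∀ w : G, ⁅conjSub w S, conjSub w S⁆ = conjSub w S := fun w => by
    rw [← conjSub_commutator, hperfS]
  have hcomm : ∀ j k : Fin n, j ≠ k →
      ∀ y ∈ conjSub (g j)⁻¹ S, ∀ z ∈ conjSub (g k)⁻¹ S, y * z = z * y := by
    intro j k hjk
    have hne : conjSub (g j)⁻¹ S ≠ conjSub (g k)⁻¹ S := fun hcontra => hjk (hdist j k hcontra)
    obtain ⟨dT, hT⟩ := hsubj (g k)⁻¹
    have hbot := key dT (hsubj (g j)⁻¹) hT (hsimpj _) (hsimpj _) (hperfj _) (hperfj _) hne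
    intro y hy z hz
    have hm := Subgroup.commutator_mem_commutator hy hz
    rw [hbot, Subgroup.mem_bot, commutatorElement_eq_one_iff_mul_comm] at hm
    exact hm
  -- the element a
  set a : G := (List.ofFn u).prod with ha
  have haA : a ∈ Subgroup.normalClosure (S : Set G) := by
    apply Subgroup.list_prod_mem
    intro y hy
    rw [List.mem_ofFn] at hy
    obtain ⟨j, rfl⟩ := hy
    show (g j)⁻¹ * s (eσ.symm j) * g j ∈ _
    have hmem : (s (eσ.symm j) : G) ∈ Subgroup.normalClosure (S : Set G) :=
      Subgroup.subset_normalClosure (hsS _)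
    have hconj := (Subgroup.normalClosure_normal (s := (S : Set G))).conj_mem _ hmem (g j)⁻¹
    rwa [inv_inv] at hconj
  -- conjugation by a agrees with conjugation by u j on the j-th factor
  have hconjA : ∀ j, conjSub a⁻¹ (conjSub (g j)⁻¹ U) = conjSub (u j)⁻¹ (conjSub (g j)⁻¹ U) := by
    intro j
    set C := Subgroup.centralizer ((conjSub (g j)⁻¹ S : Subgroup G) : Set G) with hCdef
    have hCmem : ∀ k, k ≠ j → u k ∈ C := by
      intro k hk
      rw [hCdef, Subgroup.mem_centralizer_iff]
      intro y hy
      exact hcomm j k (fun h => hk h.symm) y hy (u k) (huj k)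
    have hnormC : ∀ c ∈ C, u j * c * (u j)⁻¹ ∈ C := by
      intro c hc
      rw [hCdef, Subgroup.mem_centralizer_iff] at hc ⊢
      intro y hy
      have h1 : (u j)⁻¹ * y * u j ∈ conjSub (g j)⁻¹ S :=
        mul_mem (mul_mem (inv_mem (huj j)) hy) (huj j)
      have h2 := hc _ h1
      calc y * (u j * c * (u j)⁻¹)
          = u j * (((u j)⁻¹ * y * u j) * c) * (u j)⁻¹ := by group
        _ = u j * (c * ((u j)⁻¹ * y * u j)) * (u j)⁻¹ := by rw [h2]
        _ = (u j * c * (u j)⁻¹) * y := by group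
    obtain ⟨c, hcC, hprod⟩ := prod_decomp n u j hCmem hnormC
    have hainv : a⁻¹ = (u j)⁻¹ * c⁻¹ := by rw [ha, hprod]; group
    rw [hainv, ← conjSub_conjSub]
    congr 1
    apply conjSub_eq_self_of_centralizes
    intro h hh
    have hhS : h ∈ conjSub (g j)⁻¹ S := conjSub_mono hUS hh
    rw [hCdef, Subgroup.mem_centralizer_iff] at hcC
    have h3 := hcC h hhS
    calc c⁻¹ * h = c⁻¹ * (h * c) * c⁻¹ := by group
      _ = c⁻¹ * (c * h) * c⁻¹ := by rw [h3]
      _ = h * c⁻¹ := by group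
  refine ⟨a, haA, ?_⟩
  calc conjSub x⁻¹ (⨆ i : Fin n, conjSub (g i)⁻¹ U)
      = ⨆ i : Fin n, conjSub x⁻¹ (conjSub (g i)⁻¹ U) := conjSub_iSup _ _
    _ = ⨆ i : Fin n, conjSub (u (σ i))⁻¹ (conjSub (g (σ i))⁻¹ U) := iSup_congr hstep
    _ = ⨆ j : Fin n, conjSub (u j)⁻¹ (conjSub (g j)⁻¹ U) :=
        eσ.iSup_comp (g := fun j => conjSub (u j)⁻¹ (conjSub (g j)⁻¹ U))
    _ = ⨆ j : Fin n, conjSub a⁻¹ (conjSub (g j)⁻¹ U) := iSup_congr fun j => (hconjA j).symm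
    _ = conjSub a⁻¹ (⨆ j : Fin n, conjSub (g j)⁻¹ U) := (conjSub_iSup _ _).symm
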